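/- Let (Ω, 𝒜, ℙ) be a probability space with a filtration (ℱ_i)_{i≥0}, and let x(i) : Ω → ℝ^N be an (ℱ_i)-adapted process. Suppose that for every i the random variable V(i, x(i)) is integrable and a.s. 𝔼[V(i+1, x(i+1)) | ℱ_i] − V(i, x(i)) ≤ g(i)(1 + V(i, x(i))) − α(i)φ(i, x(i)). Then ℙ[lim_{i→∞} ρ(x(i), B) = 0] = 1, i.e., the process converges almost surely to the set B. -/

import Mathlib

open MeasureTheory ProbabilityTheory Filter Finset

noncomputable section

/-- Convergence of Markov/adapted processes via a stochastic Lyapunov (potential) function: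
if `V(i, x(i))` is integrable with supermartingale-like drift
`𝔼[V(i+1, x(i+1)) | ℱ_i] − V(i, x(i)) ≤ g(i)(1 + V(i, x(i))) − α(i) φ(i, x(i))`,
then `ρ(x(i), B) → 0` almost surely. -/
theorem stmt_0 {N : ℕ} (hN : 1 ≤ N)
    (B : Set (EuclideanSpace ℝ (Fin N))) (hBne : B.Nonempty) (hBcl : IsClosed B)
    (V φ : ℕ → EuclideanSpace ℝ (Fin N) → ℝ)
    (hVmeas : ∀ i, Measurable (V i)) (hφmeas : ∀ i, Measurable (φ i))
    (hVnn : ∀ i y, 0 ≤ V i y) (hφnn : ∀ i y, 0 ≤ φ i y)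
    -- (i) : inf of `V` away from `B` is positive
    (hVinf : ∀ ε > (0 : ℝ), ∃ c > (0 : ℝ), ∀ i y, ε ≤ Metric.infDist y B → c ≤ V i y)
    -- (ii) : `V` vanishes on `B`
    (hVB : ∀ i, ∀ y ∈ B, V i y = 0)
    -- (iii) : `sup_i V(i, ·)` is small near `B`
    (hVcont : ∀ δ > (0 : ℝ), ∃ ε > (0 : ℝ), ∀ i y, Metric.infDist y B < ε → V i y < δ)
    -- inf of `φ` away from `B` is positive
    (hφinf : ∀ ε > (0 : ℝ), ∃ c > (0 : ℝ), ∀ i y, ε ≤ Metric.infDist y B → c ≤ φ i y)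
    (α g : ℕ → ℝ) (hα_pos : ∀ i, 0 < α i)
    (hα_div : Tendsto (fun n => ∑ i ∈ Finset.range n, α i) atTop atTop)
    (hg_pos : ∀ i, 0 < g i) (hg_sum : Summable g)
    {Ω : Type} [mΩ : MeasurableSpace Ω] (Pr : Measure Ω) [IsProbabilityMeasure Pr]
    (ℱ : Filtration ℕ mΩ) (x : ℕ → Ω → EuclideanSpace ℝ (Fin N))
    (hadapted : ∀ i, Measurable[ℱ i] (x i))
    (hint : ∀ i, Integrable (fun ω => V i (x i ω)) Pr)
    (hdrift : ∀ i, ∀ᵐ ω ∂Pr,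
      (Pr[fun ω' => V (i + 1) (x (i + 1) ω') | ℱ i]) ω - V i (x i ω) ≤
        g i * (1 + V i (x i ω)) - α i * φ i (x i ω)) :
    ∀ᵐ ω ∂Pr, Tendsto (fun i => Metric.infDist (x i ω) B) atTop (nhds 0) := by
  classical
  have hg_nn : ∀ i, (0:ℝ) ≤ g i := fun i => (hg_pos i).le
  set Vp : ℕ → Ω → ℝ := fun i ω => V i (x i ω) with hVpdef
  set φp : ℕ → Ω → ℝ := fun i ω => φ i (x i ω) with hφpdef
  have hVint : ∀ i, Integrable (Vp i) Pr := hint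
  set P : ℕ → ℝ := fun n => ∏ j ∈ Finset.range n, (1 + g j) with hPdef
  have hP_one : ∀ n, (1:ℝ) ≤ P n := by
    intro n
    calc (1:ℝ) = ∏ _j ∈ Finset.range n, (1:ℝ) := by simp
    _ ≤ P n := Finset.prod_le_prod (by intro j _; norm_num)
        (fun j _ => by linarith [hg_pos j])
  have hP_pos : ∀ n, (0:ℝ) < P n := fun n => lt_of_lt_of_le one_pos (hP_one n)
  have hP_succ : ∀ n, P (n+1) = P n * (1 + g n) := fun n => Finset.prod_range_succ _ n
  have hP_mono : Monotone P := monotone_nat_of_le_succ (fun n => by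
    rw [hP_succ n]; nlinarith [hP_pos n, hg_pos n])
  set Sg : ℝ := ∑' i, g i with hSgdef
  have hSg_nn : 0 ≤ Sg := tsum_nonneg hg_nn
  have hGsum_le : ∀ n, ∑ j ∈ Finset.range n, g j ≤ Sg :=
    fun n => Summable.sum_le_tsum _ (fun j _ => hg_nn j) hg_sum
  set Cb : ℝ := Real.exp Sg with hCbdef
  have hCb_pos : 0 < Cb := Real.exp_pos _
  have hP_le : ∀ n, P n ≤ Cb := by
    intro n
    calc P n ≤ ∏ j ∈ Finset.range n, Real.exp (g j) :=
          Finset.prod_le_prod (fun j _ => by linarith [hg_pos j]) (fun j _ => by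
            have := Real.add_one_le_exp (g j); linarith)
    _ = Real.exp (∑ j ∈ Finset.range n, g j) := (Real.exp_sum _ _).symm
    _ ≤ Cb := Real.exp_le_exp.2 (hGsum_le n)
  have hxmeas : ∀ i, Measurable (x i) := fun i => (hadapted i).mono (ℱ.le i) le_rfl
  have hφpm : ∀ i, Measurable (φp i) := fun i => (hφmeas i).comp (hxmeas i)
  have hdrift' : ∀ i, ∀ᵐ ω ∂Pr,
      (Pr[Vp (i+1)|ℱ i]) ω ≤ (1 + g i) * Vp i ω + g i - α i * φp i ω := by
    intro i
    filter_upwards [hdrift i] with ω h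
    have he : Pr[Vp (i+1)|ℱ i] = Pr[fun ω' => V (i+1) (x (i+1) ω')|ℱ i] := rfl
    rw [he]
    simp only [hVpdef, hφpdef]
    linarith
  have hcond_nn : ∀ i, 0 ≤ᵐ[Pr] Pr[Vp (i+1)|ℱ i] :=
    fun i => condExp_nonneg (Filter.Eventually.of_forall fun ω => hVnn _ _)
  have hφint : ∀ i, Integrable (φp i) Pr := by
    intro i
    have hb : Integrable (fun ω => (g i * (1 + Vp i ω) + Vp i ω) / α i) Pr :=
      ((((integrable_const (1:ℝ)).add (hVint i)).const_mul (g i)).add (hVint i)).div_const _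
    refine hb.mono' (hφpm i).aestronglyMeasurable ?_
    filter_upwards [hdrift' i, hcond_nn i] with ω h1 h2
    rw [Real.norm_of_nonneg (hφnn _ _), le_div_iff₀ (hα_pos i)]
    simp only [hVpdef, hφpdef, Pi.zero_apply] at h1 h2 ⊢
    linarith
  set W : ℕ → Ω → ℝ :=
    fun n ω => Vp n ω / P n + ∑ j ∈ Finset.range n, (α j * φp j ω - g j) / P (j+1) with hWdef
  have hWadp : StronglyAdapted ℱ W := by
    intro n
    apply Measurable.stronglyMeasurable
    apply Measurable.add
    · exact ((hVmeas n).comp (hadapted n)).div_const _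
    · apply Finset.measurable_sum
      intro j hj
      have hm : Measurable[ℱ n] (φp j) :=
        ((hφmeas j).comp (hadapted j)).mono (ℱ.mono (Finset.mem_range.1 hj).le) le_rfl
      exact ((hm.const_mul (α j)).sub measurable_const).div_const _
  have hWint : ∀ n, Integrable (W n) Pr := by
    intro n
    exact Integrable.add ((hVint n).div_const _)
      (integrable_finset_sum _ fun j _ =>
        (((hφint j).const_mul (α j)).sub (integrable_const _)).div_const _)
  have hsuper : Supermartingale W ℱ Pr := by
    refine supermartingale_nat hWadp hWint (fun n => ?_)
    set C : Ω → ℝ := fun ω => ∑ j ∈ Finset.range (n+1), (α j * φp j ω - g j) / P (j+1)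
      with hCdef
    have hCmeas : StronglyMeasurable[ℱ n] C := by
      apply Measurable.stronglyMeasurable
      apply Finset.measurable_sum
      intro j hj
      have hm : Measurable[ℱ n] (φp j) :=
        ((hφmeas j).comp (hadapted j)).mono
          (ℱ.mono (Nat.lt_succ_iff.1 (Finset.mem_range.1 hj))) le_rfl
      exact ((hm.const_mul (α j)).sub measurable_const).div_const _
    have hCint : Integrable C Pr := integrable_finset_sum _ fun j _ =>
      (((hφint j).const_mul (α j)).sub (integrable_const _)).div_const _
    have hsplit : W (n+1) = (P (n+1))⁻¹ • (Vp (n+1)) + C := by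
      funext ω
      simp only [hWdef, hCdef, Pi.add_apply, Pi.smul_apply, smul_eq_mul]
      ring
    have h1 : Pr[W (n+1)|ℱ n] =ᵐ[Pr] Pr[(P (n+1))⁻¹ • (Vp (n+1))|ℱ n] + Pr[C|ℱ n] := by
      rw [hsplit]; exact condExp_add ((hVint (n+1)).smul (P (n+1))⁻¹) hCint _
    have h2 : Pr[(P (n+1))⁻¹ • (Vp (n+1))|ℱ n] =ᵐ[Pr] (P (n+1))⁻¹ • Pr[Vp (n+1)|ℱ n] :=
      condExp_smul _ _ _
    have h3 : Pr[C|ℱ n] = C := condExp_of_stronglyMeasurable (ℱ.le n) hCmeas hCint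
    filter_upwards [h1, h2, hdrift' n] with ω e1 e2 hd
    rw [Pi.add_apply, e2, h3, Pi.smul_apply, smul_eq_mul] at e1
    rw [e1]
    have hgn : (0:ℝ) < 1 + g n := by linarith [hg_pos n]
    have e4 : ((1 + g n) * Vp n ω) / P (n+1) = Vp n ω / P n := by
      rw [hP_succ n, mul_comm (P n) (1 + g n), mul_div_mul_left _ _ (ne_of_gt hgn)]
    have e5 : (P (n+1))⁻¹ * (Pr[Vp (n+1)|ℱ n]) ω + (α n * φp n ω - g n) / P (n+1)
        = ((Pr[Vp (n+1)|ℱ n]) ω + (α n * φp n ω - g n)) / P (n+1) := by ring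
    have e6 : ((Pr[Vp (n+1)|ℱ n]) ω + (α n * φp n ω - g n)) / P (n+1)
        ≤ ((1 + g n) * Vp n ω) / P (n+1) := by
      apply div_le_div_of_nonneg_right ?_ (hP_pos (n+1)).le
      linarith
    show (P (n+1))⁻¹ * (Pr[Vp (n+1)|ℱ n]) ω + C ω ≤ W n ω
    simp only [hWdef, hCdef, Finset.sum_range_succ]
    linarith [e4, e5, e6]
  -- lower bound on W
  have hW_lb : ∀ n ω, -Sg ≤ W n ω := by
    intro n ω
    have h1 : 0 ≤ Vp n ω / P n := div_nonneg (hVnn _ _) (hP_pos n).le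
    have h2 : ∀ j ∈ Finset.range n, -(g j) ≤ (α j * φp j ω - g j) / P (j+1) := by
      intro j _
      rw [le_div_iff₀ (hP_pos (j+1))]
      have h3 := mul_nonneg (hα_pos j).le (hφnn j (x j ω))
      nlinarith [mul_nonneg (hg_nn j) (sub_nonneg.2 (hP_one (j+1)))]
    have h4 : -Sg ≤ ∑ j ∈ Finset.range n, (α j * φp j ω - g j) / P (j+1) := by
      calc -Sg ≤ -(∑ j ∈ Finset.range n, g j) := by linarith [hGsum_le n]
      _ = ∑ j ∈ Finset.range n, -(g j) := by rw [Finset.sum_neg_distrib]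
      _ ≤ _ := Finset.sum_le_sum h2
    show -Sg ≤ Vp n ω / P n + ∑ j ∈ Finset.range n, (α j * φp j ω - g j) / P (j+1)
    linarith
  have hWint_le : ∀ n, ∫ ω, W n ω ∂Pr ≤ ∫ ω, W 0 ω ∂Pr := by
    intro n
    have := hsuper.setIntegral_le (Nat.zero_le n) (MeasurableSet.univ : MeasurableSet[ℱ 0] _)
    simpa [setIntegral_univ] using this
  set R : ℝ := ∫ ω, W 0 ω ∂Pr + 2 * Sg with hRdef
  have hbdd : ∀ n, eLpNorm (W n) 1 Pr ≤ ENNReal.ofReal R := by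
    intro n
    rw [eLpNorm_one_eq_lintegral_enorm, ← ofReal_integral_norm_eq_lintegral_enorm (hWint n)]
    apply ENNReal.ofReal_le_ofReal
    have habs : ∀ ω, ‖W n ω‖ ≤ W n ω + 2 * Sg := by
      intro ω
      have h1 := hW_lb n ω
      rw [Real.norm_eq_abs]
      rcases abs_cases (W n ω) with ⟨h, _⟩ | ⟨h, _⟩ <;> rw [h] <;> linarith
    calc ∫ ω, ‖W n ω‖ ∂Pr ≤ ∫ ω, (W n ω + 2 * Sg) ∂Pr :=
        integral_mono (hWint n).norm ((hWint n).add (integrable_const _))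
          (fun ω => habs ω)
    _ = ∫ ω, W n ω ∂Pr + 2 * Sg := by
        rw [integral_add (hWint n) (integrable_const _), integral_const]
        simp
    _ ≤ R := by rw [hRdef]; linarith [hWint_le n]
  have hconv : ∀ᵐ ω ∂Pr, ∃ c, Tendsto (fun n => W n ω) atTop (nhds c) := by
    have hsub : Submartingale (-W) ℱ Pr := hsuper.neg
    have hb : ∀ n, eLpNorm ((-W) n) 1 Pr ≤ ((R.toNNReal : NNReal) : ENNReal) := by
      intro n
      have he : (-W) n = -(W n) := rfl
      rw [he, eLpNorm_neg]
      have : ENNReal.ofReal R = ((R.toNNReal : NNReal) : ENNReal) := rfl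
      rw [← this]
      exact hbdd n
    filter_upwards [hsub.exists_ae_tendsto_of_bdd hb] with ω hω
    obtain ⟨c, hc⟩ := hω
    refine ⟨-c, ?_⟩
    have := hc.neg
    simpa using this
  -- deterministic sum
  have hd_sum : Summable (fun j => g j / P (j+1)) :=
    Summable.of_nonneg_of_le (fun j => div_nonneg (hg_nn j) (hP_pos _).le)
      (fun j => div_le_self (hg_nn j) (hP_one _)) hg_sum
  set D : ℕ → ℝ := fun n => ∑ j ∈ Finset.range n, g j / P (j+1) with hDdef
  set Dl : ℝ := ∑' j, g j / P (j+1) with hDldef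
  have hD_tend : Tendsto D atTop (nhds Dl) := hd_sum.hasSum.tendsto_sum_nat
  -- limit of P
  have hPbdd : BddAbove (Set.range P) := ⟨Cb, by rintro y ⟨n, rfl⟩; exact hP_le n⟩
  set Pl : ℝ := ⨆ n, P n with hPldef
  have hP_tend : Tendsto P atTop (nhds Pl) := tendsto_atTop_ciSup hP_mono hPbdd
  have hPl_one : 1 ≤ Pl := le_trans (hP_one 0) (le_ciSup hPbdd 0)
  -- main a.e. argument
  filter_upwards [hconv] with ω hω
  obtain ⟨c, hc⟩ := hω
  set S1 : ℕ → ℝ := fun n => ∑ j ∈ Finset.range n, α j * φp j ω / P (j+1) with hS1def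
  have hS1_mono : Monotone S1 := monotone_nat_of_le_succ (fun n => by
    rw [hS1def]
    simp only [Finset.sum_range_succ]
    have : 0 ≤ α n * φp n ω / P (n+1) :=
      div_nonneg (mul_nonneg (hα_pos n).le (hφnn _ _)) (hP_pos _).le
    linarith)
  set U : ℕ → ℝ := fun n => Vp n ω / P n + S1 n with hUdef
  have hWU : ∀ n, W n ω = U n - D n := by
    intro n
    show Vp n ω / P n + ∑ j ∈ Finset.range n, (α j * φp j ω - g j) / P (j+1)
      = (Vp n ω / P n + ∑ j ∈ Finset.range n, α j * φp j ω / P (j+1))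
        - ∑ j ∈ Finset.range n, g j / P (j+1)
    have hsum : ∑ j ∈ Finset.range n, (α j * φp j ω - g j) / P (j+1)
        = ∑ j ∈ Finset.range n, α j * φp j ω / P (j+1)
          - ∑ j ∈ Finset.range n, g j / P (j+1) := by
      rw [← Finset.sum_sub_distrib]
      exact Finset.sum_congr rfl (fun j _ => sub_div _ _ _)
    rw [hsum]
    ring
  have hU_tend : Tendsto U atTop (nhds (c + Dl)) := by
    have : (fun n => W n ω + D n) = U := by funext n; rw [hWU n]; ring
    rw [← this]
    exact hc.add hD_tend
  have hUbdd : BddAbove (Set.range U) := hU_tend.bddAbove_range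
  obtain ⟨M, hM⟩ := hUbdd
  have hS1_bdd : BddAbove (Set.range S1) := by
    refine ⟨M, ?_⟩
    rintro y ⟨n, rfl⟩
    have h1 : 0 ≤ Vp n ω / P n := div_nonneg (hVnn _ _) (hP_pos n).le
    have h2 : U n ≤ M := hM ⟨n, rfl⟩
    rw [hUdef] at h2
    simp only at h2
    linarith
  set l : ℝ := ⨆ n, S1 n with hldef
  have hS1_tend : Tendsto S1 atTop (nhds l) := tendsto_atTop_ciSup hS1_mono hS1_bdd
  have hS1_le : ∀ n, S1 n ≤ l := fun n => le_ciSup hS1_bdd n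
  have hVP_tend : Tendsto (fun n => Vp n ω / P n) atTop (nhds (c + Dl - l)) := by
    have : (fun n => U n - S1 n) = fun n => Vp n ω / P n := by
      funext n; rw [hUdef]; ring
    rw [← this]
    exact hU_tend.sub hS1_tend
  set L : ℝ := (c + Dl - l) * Pl with hLdef
  have hV_tend : Tendsto (fun n => Vp n ω) atTop (nhds L) := by
    have heq : (fun n => Vp n ω / P n * P n) = fun n => Vp n ω := by
      funext n; exact div_mul_cancel₀ _ (hP_pos n).ne'
    rw [hLdef, ← heq]
    exact hVP_tend.mul hP_tend
  -- bounded partial sums of α*φ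
  have hA_bdd : ∀ n, ∑ j ∈ Finset.range n, α j * φp j ω ≤ Cb * l := by
    intro n
    have h1 : ∀ j ∈ Finset.range n, α j * φp j ω ≤ α j * φp j ω / P (j+1) * Cb := by
      intro j _
      have hnn : 0 ≤ α j * φp j ω / P (j+1) :=
        div_nonneg (mul_nonneg (hα_pos j).le (hφnn _ _)) (hP_pos _).le
      calc α j * φp j ω = α j * φp j ω / P (j+1) * P (j+1) :=
            (div_mul_cancel₀ _ (hP_pos (j+1)).ne').symm
      _ ≤ α j * φp j ω / P (j+1) * Cb := mul_le_mul_of_nonneg_left (hP_le (j+1)) hnn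
    calc ∑ j ∈ Finset.range n, α j * φp j ω
        ≤ ∑ j ∈ Finset.range n, α j * φp j ω / P (j+1) * Cb := Finset.sum_le_sum h1
    _ = S1 n * Cb := by rw [hS1def, ← Finset.sum_mul]
    _ ≤ l * Cb := mul_le_mul_of_nonneg_right (hS1_le n) hCb_pos.le
    _ = Cb * l := mul_comm _ _
  -- frequently close to B
  have hfreq : ∀ ε > (0:ℝ), ∃ᶠ n in atTop, Metric.infDist (x n ω) B < ε := by
    intro ε hε
    by_contra hcon
    rw [Filter.not_frequently] at hcon
    obtain ⟨J, hJ⟩ := eventually_atTop.1 hcon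
    obtain ⟨cφ, hcφ_pos, hcφ⟩ := hφinf ε hε
    have hgrow : Tendsto (fun n => cφ * (∑ j ∈ Finset.range n, α j
        - ∑ j ∈ Finset.range J, α j)) atTop atTop := by
      apply Tendsto.const_mul_atTop hcφ_pos
      exact tendsto_atTop_add_const_right _ _ hα_div
    have hge : ∀ n, J ≤ n →
        cφ * (∑ j ∈ Finset.range n, α j - ∑ j ∈ Finset.range J, α j)
          ≤ ∑ j ∈ Finset.range n, α j * φp j ω := by
      intro n hn
      rw [← Finset.sum_Ico_eq_sub _ hn, Finset.mul_sum]
      calc ∑ j ∈ Finset.Ico J n, cφ * α j ≤ ∑ j ∈ Finset.Ico J n, α j * φp j ω := by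
            apply Finset.sum_le_sum
            intro j hj
            have hdist : ε ≤ Metric.infDist (x j ω) B := by
              have := hJ j (Finset.mem_Ico.1 hj).1
              push_neg at this
              exact this
            have hφge : cφ ≤ φp j ω := hcφ j _ hdist
            calc cφ * α j = α j * cφ := mul_comm _ _
            _ ≤ α j * φp j ω := mul_le_mul_of_nonneg_left hφge (hα_pos j).le
      _ ≤ ∑ j ∈ Finset.range n, α j * φp j ω := by
            apply Finset.sum_le_sum_of_subset_of_nonneg
            · intro j hj
              exact Finset.mem_range.2 (Finset.mem_Ico.1 hj).2
            · intro j _ _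
              exact mul_nonneg (hα_pos j).le (hφnn _ _)
    obtain ⟨n, hn1, hn2⟩ :=
      ((hgrow.eventually (eventually_gt_atTop (Cb * l))).and (eventually_ge_atTop J)).exists
    have := le_trans (hge n hn2) (hA_bdd n)
    linarith
  -- L = 0
  have hL_nn : 0 ≤ L := ge_of_tendsto' hV_tend (fun n => hVnn _ _)
  have hL_le : ∀ δ > (0:ℝ), L ≤ δ := by
    intro δ hδ
    obtain ⟨ε, hε_pos, hε⟩ := hVcont δ hδ
    have hfr : ∃ᶠ n in atTop, Vp n ω < δ :=
      (hfreq ε hε_pos).mono (fun n hn => hε n _ hn)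
    by_contra hlt
    push_neg at hlt
    have hev : ∀ᶠ n in atTop, δ < Vp n ω := hV_tend.eventually (eventually_gt_nhds hlt)
    obtain ⟨n, h1, h2⟩ := (hfr.and_eventually hev).exists
    linarith
  have hL0 : L = 0 := by
    refine le_antisymm ?_ hL_nn
    by_contra h
    push_neg at h
    have := hL_le (L/2) (by linarith)
    linarith
  -- conclusion
  rw [tendsto_order]
  constructor
  · intro b hb
    exact Filter.Eventually.of_forall fun n => lt_of_lt_of_le hb Metric.infDist_nonneg
  · intro ε hε
    obtain ⟨cV, hcV_pos, hcV⟩ := hVinf ε hε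
    have hev : ∀ᶠ n in atTop, Vp n ω < cV := by
      rw [hL0] at hV_tend
      exact hV_tend.eventually (eventually_lt_nhds hcV_pos)
    filter_upwards [hev] with n hn
    by_contra hge
    push_neg at hge
    exact absurd (hcV n _ hge) (by linarith)

end
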